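/- Let T ∈ B(H) satisfy (T − t_N)^{k_N} ⋯ (T − t_1)^{k_1} = 0 with t_1, …, t_N distinct. Then the orthogonal projection onto L_1 = ker (T − t_1)^{k_1} belongs to the unital C*-algebra C*(T, 1) generated by T. -/

import Mathlib

variable {H : Type*} [NormedAddCommGroup H] [InnerProductSpace ℂ H] [CompleteSpace H]

/-- The orthogonal projection of `H` onto a closed subspace `K`, as an element of `B(H)`. -/
noncomputable def orthProjOnto (K : Submodule ℂ H) (hK : IsClosed (K : Set H)) :
    H →L[ℂ] H :=
  haveI : CompleteSpace K := hK.completeSpace_coe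
  K.subtypeL.comp K.orthogonalProjectionOnto

open scoped InnerProductSpace

lemma aux_isUnit_one_add_star_mul_self (d : H →L[ℂ] H) : IsUnit (1 + star d * d) := by
  have hnn : (0 : H →L[ℂ] H) ≤ star d * d := star_mul_self_nonneg d
  have hneg : (-1 : ℝ) ∉ spectrum ℝ (star d * d) := fun hmem =>
    absurd (spectrum_nonneg_of_nonneg hnn hmem) (by norm_num)
  rw [spectrum.notMem_iff] at hneg
  have heq : algebraMap ℝ (H →L[ℂ] H) (-1) - star d * d = -(1 + star d * d) := by
    rw [map_neg, map_one, neg_add]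
    abel
  rw [heq] at hneg
  exact (IsUnit.neg_iff _).mp hneg

/-- If `e` is an idempotent in a closed star subalgebra `S` of `B(H)` whose range is the
closed subspace `L` (in the sense that `e` maps into `L` and fixes `L` pointwise), then the
orthogonal projection onto `L` belongs to `S`. -/
lemma aux_orthProjOnto_mem_of_idempotent (S : StarSubalgebra ℂ (H →L[ℂ] H))
    (hclosed : IsClosed (S : Set (H →L[ℂ] H)))
    (e : H →L[ℂ] H) (heS : e ∈ S) (hee : e * e = e)
    (L : Submodule ℂ H) (hL : IsClosed (L : Set H))
    (hrange : ∀ x, e x ∈ L) (hfix : ∀ x ∈ L, e x = x) :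
    orthProjOnto L hL ∈ S := by
  haveI : IsClosed (S : Set (H →L[ℂ] H)) := hclosed
  set f := star e with hf_def
  have hff : f * f = f := by rw [hf_def, ← star_mul, hee]
  set s := e + f - 1 with hs_def
  have hs_sa : star s = s := by
    rw [hs_def, hf_def]
    simp only [star_sub, star_add, star_one, star_star]
    abel
  have hes : e * s = e * f := by
    rw [hs_def, mul_sub, mul_add, hee, mul_one]; abel
  have hse : s * e = f * e := by
    rw [hs_def, sub_mul, add_mul, hee, one_mul]; abel
  have hfs : f * s = f * e := by
    rw [hs_def, mul_sub, mul_add, hff, mul_one]; abel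
  have hstar_d : star (e - f) = f - e := by rw [hf_def, star_sub, star_star]
  have hss : s * s = 1 + (f - e) * (e - f) := by
    rw [hs_def]
    simp only [mul_sub, sub_mul, mul_add, add_mul, mul_one, one_mul, hee, hff]
    abel
  have hunit_ss : IsUnit (s * s) := by
    have h := aux_isUnit_one_add_star_mul_self (e - f)
    rw [hstar_d] at h
    rw [hss]; exact h
  obtain ⟨u, hu⟩ := hunit_ss
  have hv1 : (s * s) * (↑u⁻¹ : H →L[ℂ] H) = 1 := by rw [← hu]; exact u.mul_inv
  have hv2 : (↑u⁻¹ : H →L[ℂ] H) * (s * s) = 1 := by rw [← hu]; exact u.inv_mul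
  have hLinv : ((↑u⁻¹ : H →L[ℂ] H) * s) * s = 1 := by rw [mul_assoc]; exact hv2
  have hRinv : s * (s * (↑u⁻¹ : H →L[ℂ] H)) = 1 := by rw [← mul_assoc]; exact hv1
  have hs_unit : IsUnit s := isUnit_iff_exists.mpr
    ⟨s * (↑u⁻¹ : H →L[ℂ] H), hRinv, by rw [← left_inv_eq_right_inv hLinv hRinv]; exact hLinv⟩
  have hfS : f ∈ S := star_mem heS
  have hsS : s ∈ S := by rw [hs_def]; exact sub_mem (add_mem heS hfS) (one_mem S)
  have hs'_unit : IsUnit (⟨s, hsS⟩ : S) := S.coe_isUnit.mp hs_unit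
  obtain ⟨u', hu'⟩ := hs'_unit
  set w : H →L[ℂ] H := ((↑(u'⁻¹) : S) : H →L[ℂ] H) with hw_def
  have hwS : w ∈ S := SetLike.coe_mem _
  have hsw : s * w = 1 := by
    have h := congrArg (Subtype.val : S → (H →L[ℂ] H)) u'.mul_inv
    simpa [hu', hw_def] using h
  have hws : w * s = 1 := by
    have h := congrArg (Subtype.val : S → (H →L[ℂ] H)) u'.inv_mul
    simpa [hu', hw_def] using h
  have hw_star : star w = w := by
    have h1 : star w * s = 1 := by
      have h := congrArg star hsw
      rwa [star_mul, star_one, hs_sa] at h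
    calc star w = star w * (s * w) := by rw [hsw, mul_one]
      _ = (star w * s) * w := by rw [mul_assoc]
      _ = w := by rw [h1, one_mul]
  have cancel : ∀ X : H →L[ℂ] H, w * (s * X * s) * w = X := fun X => by
    simp only [← mul_assoc]
    rw [hws, one_mul, mul_assoc, hsw, mul_one]
  have h1 : s * (w * f) * s = f * e := by
    simp only [← mul_assoc]
    rw [hsw, one_mul]; exact hfs
  have h2 : s * (e * w) * s = f * e := by
    simp only [← mul_assoc]
    rw [hse, mul_assoc, hws, mul_one]
  have hwe : w * f = e * w := by
    have h := congrArg (fun X => w * X * w) (h1.trans h2.symm)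
    simpa only [cancel] using h
  set P := e * w with hP_def
  have hPS : P ∈ S := mul_mem heS hwS
  have hPstar : star P = P := by
    rw [hP_def, star_mul, hw_star, ← hf_def, hwe]
  have hPe : P * e = e := by
    rw [← hwe, mul_assoc, ← hse, ← mul_assoc, hws, one_mul]
  have hPP : P * P = P := by
    calc P * P = P * (e * w) := congrArg (P * ·) hP_def
      _ = (P * e) * w := (mul_assoc _ _ _).symm
      _ = e * w := by rw [hPe]
      _ = P := hP_def.symm
  -- Now identify P with the orthogonal projection.
  haveI : CompleteSpace L := hL.completeSpace_coe
  have hProj : orthProjOnto L hL = P := by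
    ext x
    have hPmem : P x ∈ L := by
      rw [hP_def, ContinuousLinearMap.mul_apply]
      exact hrange _
    have hfixL : ∀ y ∈ L, P y = y := by
      intro y hy
      have h1 : e y = y := hfix y hy
      calc P y = P (e y) := by rw [h1]
        _ = (P * e) y := (ContinuousLinearMap.mul_apply _ _ _).symm
        _ = e y := by rw [hPe]
        _ = y := h1
    show (L.orthogonalProjectionOnto x : H) = P x
    refine Submodule.eq_starProjection_of_mem_of_inner_eq_zero hPmem fun y hy => ?_
    have hPy := hfixL y hy
    have hadj : ContinuousLinearMap.adjoint P = P := by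
      rw [← ContinuousLinearMap.star_eq_adjoint, hPstar]
    rw [inner_sub_left, sub_eq_zero]
    calc (⟪x, y⟫_ℂ) = ⟪x, P y⟫_ℂ := by rw [hPy]
      _ = ⟪ContinuousLinearMap.adjoint P x, y⟫_ℂ :=
          (ContinuousLinearMap.adjoint_inner_left P y x).symm
      _ = ⟪P x, y⟫_ℂ := by rw [hadj]
  rw [hProj]
  exact hPS

open Polynomial in
/-- Let `T ∈ B(H)` satisfy `(T - t_N)^{k_N} ⋯ (T - t_0)^{k_0} = 0` with the `t i`
distinct and `k i ≥ 1`.  Then the orthogonal projection onto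
`L₁ = ker (T - t_0)^{k_0}` belongs to the unital C*-algebra `C*(T, 1)` generated by
`T`, i.e. the norm closure of the unital *-subalgebra generated by `T`. -/
theorem orthogonalProjection_mem_elementalStarAlgebra
    {N : ℕ} (t : Fin (N + 1) → ℂ) (ht : Function.Injective t)
    (k : Fin (N + 1) → ℕ) (hk : ∀ i, 1 ≤ k i)
    (T : H →L[ℂ] H)
    (hT : (List.ofFn fun i : Fin (N + 1) => (T - t i • (1 : H →L[ℂ] H)) ^ k i).prod = 0) :
    orthProjOnto (LinearMap.ker ((T - t 0 • (1 : H →L[ℂ] H)) ^ k 0))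
        (by exact ContinuousLinearMap.isClosed_ker ((T - t 0 • (1 : H →L[ℂ] H)) ^ k 0)) ∈
      (StarAlgebra.adjoin ℂ ({T} : Set (H →L[ℂ] H))).topologicalClosure := by
  classical
  set S := (StarAlgebra.adjoin ℂ ({T} : Set (H →L[ℂ] H))).topologicalClosure with hS_def
  have hSclosed : IsClosed (S : Set (H →L[ℂ] H)) :=
    StarSubalgebra.isClosed_topologicalClosure _
  have hTS : T ∈ S :=
    (StarSubalgebra.le_topologicalClosure _) (StarAlgebra.self_mem_adjoin_singleton ℂ T)
  have hmem : ∀ g : ℂ[X], aeval T g ∈ S := fun g => by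
    have h1 : aeval T g ∈ Algebra.adjoin ℂ ({T} : Set (H →L[ℂ] H)) :=
      Polynomial.aeval_mem_adjoin_singleton ℂ T
    exact Algebra.adjoin_le (Set.singleton_subset_iff.2 hTS) h1
  -- polynomials
  set p : Fin (N + 1) → ℂ[X] := fun i => (X - C (t i)) ^ k i with hp_def
  have hfac : ∀ i, (T - t i • (1 : H →L[ℂ] H)) ^ k i = aeval T (p i) := fun i => by
    simp [hp_def, map_pow, map_sub, aeval_X, aeval_C, Algebra.algebraMap_eq_smul_one]
  have hT' : aeval T (∏ i, p i) = 0 := by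
    have hfn : (fun i : Fin (N + 1) => (T - t i • (1 : H →L[ℂ] H)) ^ k i)
        = (aeval T) ∘ p := funext fun i => hfac i
    rw [← List.prod_ofFn, map_list_prod, List.map_ofFn, ← hfn, hT]
  set q : ℂ[X] := p 0 with hq_def
  set r : ℂ[X] := ∏ i ∈ Finset.univ.erase 0, p i with hr_def
  have hqr0 : aeval T (q * r) = 0 := by
    rw [show q * r = ∏ i, p i from Finset.mul_prod_erase Finset.univ p (Finset.mem_univ 0)]
    exact hT'
  have hcop : IsCoprime q r := by
    rw [hr_def]
    apply IsCoprime.prod_right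
    intro i hi
    have h0i : (0 : Fin (N + 1)) ≠ i := (Finset.ne_of_mem_erase hi).symm
    exact ((Polynomial.pairwise_coprime_X_sub_C ht) h0i).pow
  obtain ⟨a, b, hab⟩ := hcop
  -- the algebraic idempotent
  have h1 : (b * r) * (b * r) = b * r - a * b * (q * r) := by
    linear_combination (b * r) * hab
  have h2 : aeval T (a * b * (q * r)) = 0 := by
    rw [show a * b * (q * r) = (a * b) * (q * r) from by ring, map_mul, hqr0, mul_zero]
  have hee : aeval T (b * r) * aeval T (b * r) = aeval T (b * r) := by
    rw [← map_mul, h1, map_sub, h2, sub_zero]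
  have h3 : aeval T (b * (q * r)) = 0 := by
    rw [map_mul, hqr0, mul_zero]
  have hAe : aeval T q * aeval T (b * r) = 0 := by
    rw [← map_mul, show q * (b * r) = b * (q * r) from by ring, h3]
  have hbezout : aeval T a * aeval T q + aeval T (b * r) = 1 := by
    have h := congrArg (aeval T) hab
    rw [map_add, map_mul, map_one] at h
    exact h
  have hq0 : (T - t 0 • (1 : H →L[ℂ] H)) ^ k 0 = aeval T q := hfac 0
  -- apply the auxiliary lemma
  refine aux_orthProjOnto_mem_of_idempotent S hSclosed (aeval T (b * r)) (hmem _) hee _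
    (ContinuousLinearMap.isClosed_ker _) ?_ ?_
  · intro x
    rw [LinearMap.mem_ker, hq0, ContinuousLinearMap.coe_coe, ← ContinuousLinearMap.mul_apply, hAe,
      ContinuousLinearMap.zero_apply]
  · intro x hx
    rw [LinearMap.mem_ker, hq0, ContinuousLinearMap.coe_coe] at hx
    have h := congrArg (fun g : H →L[ℂ] H => g x) hbezout
    simp only [ContinuousLinearMap.add_apply, ContinuousLinearMap.mul_apply,
      ContinuousLinearMap.one_apply, hx, map_zero, zero_add] at h
    exact h
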